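/- Let (X₁,X₂) be a pair of random variables on a finite set and let P* = max_{(x₁,x₂)} P(x₁,x₂). For any random variable C jointly distributed with (X₁,X₂), any estimator ψ from the range of C, and any ν > 0, the probability Pr[ψ(C) = (X₁,X₂)] ≤ 2^ν · P* + (1/ν)·I(C; X₁,X₂). -/

import Mathlib

open Finset Real
open scoped Classical BigOperators

/-- Probability of an event under a weight function on a finite sample space. -/
noncomputable def pr {Ω : Type*} [Fintype Ω] (p : Ω → ℝ) (E : Ω → Prop) : ℝ :=
  ∑ ω, if E ω then p ω else 0

/-- `p` is a probability mass function. -/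
def IsPMF {Ω : Type*} [Fintype Ω] (p : Ω → ℝ) : Prop :=
  (∀ ω, 0 ≤ p ω) ∧ ∑ ω, p ω = 1

/-- Shannon entropy (in bits) of a random variable `X` on a finite space. -/
noncomputable def Hent {Ω α : Type*} [Fintype Ω] [Fintype α] (p : Ω → ℝ) (X : Ω → α) : ℝ :=
  -∑ a, pr p (fun ω => X ω = a) * Real.logb 2 (pr p (fun ω => X ω = a))

/-- Mutual information (in bits) between random variables `X` and `Y`. -/
noncomputable def MI {Ω α β : Type*} [Fintype Ω] [Fintype α] [Fintype β]
    (p : Ω → ℝ) (X : Ω → α) (Y : Ω → β) : ℝ :=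
  Hent p X + Hent p Y - Hent p (fun ω => (X ω, Y ω))

/-- Kullback–Leibler divergence (in bits) between distributions on a finite set. -/
noncomputable def KL {S : Type*} [Fintype S] (Q P : S → ℝ) : ℝ :=
  ∑ s, Q s * Real.logb 2 (Q s / P s)

/-! ### Auxiliary scalar inequalities -/

lemma scalar1 (q r : ℝ) (hq : 0 ≤ q) (hr : 0 ≤ r) (h0 : r = 0 → q = 0) :
    0 ≤ q * Real.log (q / r) + r - q := by
  rcases eq_or_lt_of_le hr with h | hr
  · simp [h0 h.symm, ← h]
  rcases eq_or_lt_of_le hq with h | hq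
  · simp [← h]; linarith
  have h1 : Real.log (r / q) ≤ r / q - 1 :=
    Real.log_le_sub_one_of_pos (by positivity)
  rw [Real.log_div (ne_of_gt hr) (ne_of_gt hq)] at h1
  have : Real.log (q / r) = Real.log q - Real.log r :=
    Real.log_div (ne_of_gt hq) (ne_of_gt hr)
  have h2 : r / q - 1 = (r - q) / q := by field_simp
  rw [this]
  have : q - r ≤ q * (Real.log q - Real.log r) := by
    have := mul_le_mul_of_nonneg_left h1 hq.le
    rw [h2] at this
    have hrq : q * ((r - q)/q) = r - q := by field_simp
    nlinarith [this]
  linarith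

lemma scalar2 (q r ν : ℝ) (hq : 0 ≤ q) (hr : 0 ≤ r) (h0 : r = 0 → q = 0) (hν : 0 < ν) :
    ν * Real.log 2 * (q - (2:ℝ)^ν * r) ≤ q * Real.log (q / r) + r - q := by
  rcases eq_or_lt_of_le hr with h | hr
  · have hq0 := h0 h.symm
    simp [hq0, ← h]
  rcases eq_or_lt_of_le hq with h | hq
  · have h2 : (0:ℝ) < (2:ℝ)^ν := by positivity
    have : ν * Real.log 2 * (0 - (2:ℝ)^ν * r) ≤ 0 := by
      have hl : (0:ℝ) < Real.log 2 := Real.log_pos (by norm_num)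
      have := mul_pos (mul_pos (mul_pos hν hl) h2) hr
      nlinarith
    rw [← h]; simp only [zero_mul, sub_zero, zero_div, Real.log_zero]; linarith
  -- main case: q, r > 0
  set u := ν * Real.log 2 with hu
  have hu0 : 0 < u := by
    have : (0:ℝ) < Real.log 2 := Real.log_pos (by norm_num)
    positivity
  have h2u : (2:ℝ)^ν = Real.exp u := by
    rw [Real.rpow_def_of_pos (by norm_num : (0:ℝ) < 2), mul_comm]
  rw [h2u]
  set t := q / r with ht
  have htpos : 0 < t := by positivity
  have hqrt : q = r * t := by rw [ht, mul_comm, div_mul_cancel₀ q (ne_of_gt hr)]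
  have key : t - Real.exp u ≤ t * Real.log (t / Real.exp u) := by
    have h1 : Real.log (Real.exp u / t) ≤ Real.exp u / t - 1 :=
      Real.log_le_sub_one_of_pos (by positivity)
    have h3 : Real.log (t / Real.exp u) = - Real.log (Real.exp u / t) := by
      rw [← Real.log_inv]; congr 1; field_simp
    rw [h3]
    have := mul_le_mul_of_nonneg_left h1 htpos.le
    have he : t * (Real.exp u / t) = Real.exp u := by field_simp
    nlinarith
  have hlt : Real.log (t / Real.exp u) = Real.log t - u := by
    rw [Real.log_div (ne_of_gt htpos) (Real.exp_ne_zero u), Real.log_exp]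
  rw [hlt] at key
  have key2 : 0 ≤ 1 + Real.exp u * (u - 1) := by
    have := Real.add_one_le_exp (-u)
    have hp : 0 < Real.exp u := Real.exp_pos u
    have : Real.exp u * (-u + 1) ≤ Real.exp u * Real.exp (-u) := by
      nlinarith
    rw [← Real.exp_add] at this
    simp at this
    nlinarith
  have hdecomp : q * Real.log (q / r) + r - q - u * (q - Real.exp u * r)
      = r * ((t * Real.log t - u * t) + 1 - t + u * Real.exp u) := by
    rw [hqrt]; have : r * t / r = t := by field_simp
    rw [this]; ring
  nlinarith [mul_le_mul_of_nonneg_left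
    (by nlinarith [key] :
      1 + Real.exp u * (u-1) ≤ (t * Real.log t - u * t) + 1 - t + u * Real.exp u) hr.le]

/-! ### Probability lemmas -/

lemma pr_nonneg {Ω : Type*} [Fintype Ω] {p : Ω → ℝ} (hp : ∀ ω, 0 ≤ p ω) (E : Ω → Prop) :
    0 ≤ pr p E := by
  apply Finset.sum_nonneg; intro ω _; split <;> simp [hp ω]

lemma pr_mono {Ω : Type*} [Fintype Ω] {p : Ω → ℝ} (hp : ∀ ω, 0 ≤ p ω) {E F : Ω → Prop}
    (h : ∀ ω, E ω → F ω) : pr p E ≤ pr p F := by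
  apply Finset.sum_le_sum; intro ω _
  by_cases hE : E ω
  · simp [hE, h ω hE]
  · simp [hE]; split <;> simp [hp ω]

lemma sum_single_aux {γ : Type*} [Fintype γ] (a : γ) (v : ℝ) (f : γ → ℝ)
    (h1 : f a = v) (h2 : ∀ b, b ≠ a → f b = 0) : v = ∑ x, f x := by
  rw [Finset.sum_eq_single_of_mem a (Finset.mem_univ _) (fun b _ => h2 b), h1]

lemma sum_q_left {Ω γ δ : Type*} [Fintype Ω] [Fintype γ] [Fintype δ]
    (p : Ω → ℝ) (C : Ω → γ) (Z : Ω → δ) (c : γ) :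
    ∑ z, pr p (fun ω => (C ω, Z ω) = (c, z)) = pr p (fun ω => C ω = c) := by
  simp only [pr]
  rw [Finset.sum_comm]
  apply Finset.sum_congr rfl; intro ω _
  by_cases hc : C ω = c
  · simp [Prod.ext_iff, hc]
  · simp [Prod.ext_iff, hc]

lemma sum_q_right {Ω γ δ : Type*} [Fintype Ω] [Fintype γ] [Fintype δ]
    (p : Ω → ℝ) (C : Ω → γ) (Z : Ω → δ) (z : δ) :
    ∑ c, pr p (fun ω => (C ω, Z ω) = (c, z)) = pr p (fun ω => Z ω = z) := by
  simp only [pr]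
  rw [Finset.sum_comm]
  apply Finset.sum_congr rfl; intro ω _
  by_cases hz : Z ω = z
  · simp [Prod.ext_iff, hz]
  · simp [Prod.ext_iff, hz]

lemma pr_psi {Ω γ δ : Type*} [Fintype Ω] [Fintype γ] [Fintype δ]
    (p : Ω → ℝ) (C : Ω → γ) (Z : Ω → δ) (ψ : γ → δ) :
    pr p (fun ω => ψ (C ω) = Z ω) = ∑ c, pr p (fun ω => (C ω, Z ω) = (c, ψ c)) := by
  simp only [pr]
  rw [Finset.sum_comm]
  apply Finset.sum_congr rfl; intro ω _
  by_cases h : ψ (C ω) = Z ω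
  · rw [if_pos h]
    refine sum_single_aux (C ω) _ _ ?_ ?_
    · exact if_pos (by rw [h])
    · intro b hb
      exact if_neg (fun hc => hb (by injection hc with h1 h2; exact h1.symm))
  · rw [if_neg h]
    exact (Finset.sum_eq_zero (fun c _ => if_neg (fun hc => h (by
      injection hc with h1 h2; rw [h1, ← h2])))).symm

lemma sum_pr_fiber {Ω γ : Type*} [Fintype Ω] [Fintype γ] (p : Ω → ℝ) (C : Ω → γ) :
    ∑ c, pr p (fun ω => C ω = c) = ∑ ω, p ω := by
  simp only [pr]
  rw [Finset.sum_comm]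
  apply Finset.sum_congr rfl; intro ω _
  simp [Finset.sum_ite_eq univ (C ω)]

/-! ### Entropy-sum identity -/

lemma kl_expand {γ δ : Type*} [Fintype γ] [Fintype δ]
    (q : γ → δ → ℝ) (qC : γ → ℝ) (qZ : δ → ℝ)
    (hqC : ∀ c, ∑ z, q c z = qC c)
    (hqZ : ∀ z, ∑ c, q c z = qZ z)
    (hq0 : ∀ c z, 0 ≤ q c z)
    (hle1 : ∀ c z, q c z ≤ qC c)
    (hle2 : ∀ c z, q c z ≤ qZ z) :
    ∑ c, ∑ z, q c z * Real.logb 2 (q c z / (qC c * qZ z))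
      = (-∑ c, qC c * Real.logb 2 (qC c)) + (-∑ z, qZ z * Real.logb 2 (qZ z))
        - (-∑ c, ∑ z, q c z * Real.logb 2 (q c z)) := by
  have pointwise : ∀ c z, q c z * Real.logb 2 (q c z / (qC c * qZ z))
      = q c z * Real.logb 2 (q c z) - q c z * Real.logb 2 (qC c)
        - q c z * Real.logb 2 (qZ z) := by
    intro c z
    rcases eq_or_lt_of_le (hq0 c z) with h | h
    · simp [← h]
    · have hC : 0 < qC c := lt_of_lt_of_le h (hle1 c z)
      have hZ : 0 < qZ z := lt_of_lt_of_le h (hle2 c z)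
      rw [Real.logb_div (ne_of_gt h) (by positivity),
        Real.logb_mul (ne_of_gt hC) (ne_of_gt hZ)]
      ring
  rw [Finset.sum_congr rfl fun c _ => Finset.sum_congr rfl fun z _ => pointwise c z]
  simp only [Finset.sum_sub_distrib]
  have e1 : ∑ c, ∑ z, q c z * Real.logb 2 (qC c) = ∑ c, qC c * Real.logb 2 (qC c) := by
    apply Finset.sum_congr rfl; intro c _
    rw [← Finset.sum_mul, hqC c]
  have e2 : ∑ c, ∑ z, q c z * Real.logb 2 (qZ z) = ∑ z, qZ z * Real.logb 2 (qZ z) := by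
    rw [Finset.sum_comm]
    apply Finset.sum_congr rfl; intro z _
    rw [← Finset.sum_mul, hqZ z]
  rw [e1, e2]
  ring

/-! ### Abstract main inequality -/

lemma main_abstract {γ δ : Type*} [Fintype γ] [Fintype δ]
    (q : γ → δ → ℝ) (qC : γ → ℝ) (qZ : δ → ℝ)
    (hqC : ∀ c, ∑ z, q c z = qC c)
    (hqZ : ∀ z, ∑ c, q c z = qZ z)
    (hq0 : ∀ c z, 0 ≤ q c z)
    (hle1 : ∀ c z, q c z ≤ qC c)
    (hle2 : ∀ c z, q c z ≤ qZ z)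
    (hsum1 : ∑ c, qC c = 1)
    (ψ : γ → δ) (ν : ℝ) (hν : 0 < ν) (Pstar : ℝ) (hP : ∀ z, qZ z ≤ Pstar) :
    ∑ c, q c (ψ c) ≤ (2:ℝ)^ν * Pstar
      + (1/ν) * ∑ c, ∑ z, q c z * Real.logb 2 (q c z / (qC c * qZ z)) := by
  have log2pos : (0:ℝ) < Real.log 2 := Real.log_pos (by norm_num)
  have h2ν : (0:ℝ) < (2:ℝ)^ν := by positivity
  have hC0 : ∀ c, 0 ≤ qC c := fun c => (hqC c) ▸ Finset.sum_nonneg (fun z _ => hq0 c z)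
  have hZ0 : ∀ z, 0 ≤ qZ z := fun z => (hqZ z) ▸ Finset.sum_nonneg (fun c _ => hq0 c z)
  have hr0 : ∀ c z, qC c * qZ z = 0 → q c z = 0 := by
    intro c z h
    rcases mul_eq_zero.mp h with h | h
    · exact le_antisymm (h ▸ hle1 c z) (hq0 c z)
    · exact le_antisymm (h ▸ hle2 c z) (hq0 c z)
  have hsum2 : ∑ z, qZ z = 1 := by
    rw [← hsum1, Finset.sum_congr rfl (fun z (_ : z ∈ univ) => (hqZ z).symm),
        Finset.sum_comm, Finset.sum_congr rfl (fun c (_ : c ∈ univ) => hqC c)]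
  set KL := ∑ c, ∑ z, q c z * Real.logb 2 (q c z / (qC c * qZ z)) with hKL
  set T := ∑ c, ∑ z, (q c z * Real.log (q c z / (qC c * qZ z)) + qC c * qZ z - q c z) with hT
  have key : ∀ c, ν * Real.log 2 * (q c (ψ c) - (2:ℝ)^ν * (qC c * qZ (ψ c)))
      ≤ ∑ z, (q c z * Real.log (q c z / (qC c * qZ z)) + qC c * qZ z - q c z) := by
    intro c
    refine le_trans (scalar2 _ _ ν (hq0 c (ψ c))
      (mul_nonneg (hC0 c) (hZ0 (ψ c))) (hr0 c (ψ c)) hν) ?_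
    exact Finset.single_le_sum
      (f := fun z => q c z * Real.log (q c z / (qC c * qZ z)) + qC c * qZ z - q c z)
      (fun z _ => scalar1 _ _ (hq0 c z) (mul_nonneg (hC0 c) (hZ0 z)) (hr0 c z))
      (Finset.mem_univ (ψ c))
  have hsumineq : ∑ c, (ν * Real.log 2 * (q c (ψ c) - (2:ℝ)^ν * (qC c * qZ (ψ c)))) ≤ T :=
    Finset.sum_le_sum (fun c _ => key c)
  have hA : ∑ c, ∑ z, qC c * qZ z = 1 := by
    rw [Finset.sum_congr rfl (fun c (_ : c ∈ univ) => by rw [← Finset.mul_sum, hsum2, mul_one]),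
      hsum1]
  have hB : ∑ c, ∑ z, q c z = 1 := by
    rw [Finset.sum_congr rfl (fun c (_ : c ∈ univ) => hqC c), hsum1]
  have hCC : ∑ c, ∑ z, q c z * Real.log (q c z / (qC c * qZ z)) = Real.log 2 * KL := by
    rw [hKL, Finset.mul_sum]
    apply Finset.sum_congr rfl; intro c _
    rw [Finset.mul_sum]
    apply Finset.sum_congr rfl; intro z _
    rw [Real.logb]
    field_simp
  have hTeq : T = Real.log 2 * KL := by
    calc T = (∑ c, ∑ z, q c z * Real.log (q c z / (qC c * qZ z)))
          + (∑ c, ∑ z, qC c * qZ z) - (∑ c, ∑ z, q c z) := by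
            rw [hT]
            simp only [Finset.sum_add_distrib, Finset.sum_sub_distrib]
      _ = Real.log 2 * KL + 1 - 1 := by rw [hCC, hA, hB]
      _ = Real.log 2 * KL := by ring
  have expand : ∑ c, (ν * Real.log 2 * (q c (ψ c) - (2:ℝ)^ν * (qC c * qZ (ψ c))))
      = ν * Real.log 2 * ((∑ c, q c (ψ c)) - (2:ℝ)^ν * ∑ c, (qC c * qZ (ψ c))) := by
    rw [← Finset.mul_sum]
    congr 1
    rw [Finset.sum_sub_distrib, ← Finset.mul_sum]
  rw [expand, hTeq] at hsumineq
  set S := ∑ c, qC c * qZ (ψ c) with hSdef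
  have hS : S ≤ Pstar := by
    calc S ≤ ∑ c, qC c * Pstar :=
          Finset.sum_le_sum (fun c _ => mul_le_mul_of_nonneg_left (hP _) (hC0 c))
      _ = Pstar := by rw [← Finset.sum_mul, hsum1, one_mul]
  have h1 : ν * ((∑ c, q c (ψ c)) - (2:ℝ)^ν * S) ≤ KL := by
    have e : ν * Real.log 2 * ((∑ c, q c (ψ c)) - (2:ℝ)^ν * S)
        = Real.log 2 * (ν * ((∑ c, q c (ψ c)) - (2:ℝ)^ν * S)) := by ring
    rw [e] at hsumineq
    exact (mul_le_mul_iff_right₀ log2pos).mp hsumineq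
  have h2 : (∑ c, q c (ψ c)) - (2:ℝ)^ν * S ≤ KL / ν := (le_div_iff₀' hν).mpr h1
  have h3 : (2:ℝ)^ν * S ≤ (2:ℝ)^ν * Pstar := mul_le_mul_of_nonneg_left hS h2ν.le
  have h4 : (1/ν) * KL = KL / ν := one_div_mul_eq_div ν KL
  linarith

/-! ### Main theorem in generic form -/

theorem aux_main {Ω γ δ : Type*} [Fintype Ω] [Fintype γ] [Fintype δ]
    (p : Ω → ℝ) (hp : IsPMF p) (C : Ω → γ) (Z : Ω → δ) (ψ : γ → δ)
    (ν : ℝ) (hν : 0 < ν) (Pstar : ℝ)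
    (hP : ∀ z, pr p (fun ω => Z ω = z) ≤ Pstar) :
    pr p (fun ω => ψ (C ω) = Z ω) ≤ (2:ℝ)^ν * Pstar + (1/ν) * MI p C Z := by
  have hq0 : ∀ c z, 0 ≤ pr p (fun ω => (C ω, Z ω) = (c, z)) :=
    fun c z => pr_nonneg hp.1 _
  have hqC := sum_q_left p C Z
  have hqZ := sum_q_right p C Z
  have hle1 : ∀ c z, pr p (fun ω => (C ω, Z ω) = (c, z)) ≤ pr p (fun ω => C ω = c) :=
    fun c z => pr_mono hp.1 (fun ω h => congrArg Prod.fst h)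
  have hle2 : ∀ c z, pr p (fun ω => (C ω, Z ω) = (c, z)) ≤ pr p (fun ω => Z ω = z) :=
    fun c z => pr_mono hp.1 (fun ω h => congrArg Prod.snd h)
  have hsum1 : ∑ c, pr p (fun ω => C ω = c) = 1 := by
    rw [sum_pr_fiber, hp.2]
  have hMI : MI p C Z = ∑ c, ∑ z, pr p (fun ω => (C ω, Z ω) = (c, z)) *
      Real.logb 2 (pr p (fun ω => (C ω, Z ω) = (c, z)) /
        (pr p (fun ω => C ω = c) * pr p (fun ω => Z ω = z))) := by
    have h := kl_expand (fun c z => pr p (fun ω => (C ω, Z ω) = (c, z)))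
      (fun c => pr p (fun ω => C ω = c)) (fun z => pr p (fun ω => Z ω = z))
      hqC hqZ hq0 hle1 hle2
    have hpair : Hent p (fun ω => (C ω, Z ω))
        = -∑ c, ∑ z, pr p (fun ω => (C ω, Z ω) = (c, z)) *
            Real.logb 2 (pr p (fun ω => (C ω, Z ω) = (c, z))) := by
      rw [Hent, Fintype.sum_prod_type]
    rw [MI, hpair, Hent, Hent]
    exact h.symm
  rw [pr_psi p C Z ψ, hMI]
  exact main_abstract _ _ _ hqC hqZ hq0 hle1 hle2 hsum1 ψ ν hν Pstar hP

/-- Pr[ψ(C) = (X₁,X₂)] ≤ 2^ν · P* + (1/ν)·I(C; X₁,X₂). -/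
theorem stmt15 {Ω α β γ : Type*} [Fintype Ω] [Fintype α] [Fintype β] [Fintype γ]
    [Nonempty α] [Nonempty β]
    (p : Ω → ℝ) (hp : IsPMF p) (X₁ : Ω → α) (X₂ : Ω → β) (C : Ω → γ)
    (ψ : γ → α × β) (ν : ℝ) (hν : 0 < ν) :
    pr p (fun ω => ψ (C ω) = (X₁ ω, X₂ ω))
      ≤ (2 : ℝ) ^ ν *
          (Finset.univ.sup' Finset.univ_nonempty
            (fun ab : α × β => pr p (fun ω => (X₁ ω, X₂ ω) = ab)))
        + (1 / ν) * MI p C (fun ω => (X₁ ω, X₂ ω)) := by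
  exact aux_main p hp C (fun ω => (X₁ ω, X₂ ω)) ψ ν hν _
    (fun z => Finset.le_sup' (fun ab : α × β => pr p (fun ω => (X₁ ω, X₂ ω) = ab))
      (Finset.mem_univ z))
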